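/- arXiv:1407.1503 — 3 statements merged into one kernel-verified Lean document; each statement's English description precedes it below -/
import Mathlib

section
/- Let K be a complex Hilbert space, A, A_ζ : K → K bounded operators, 𝕏 : K → K a boundedly invertible operator, B : ℂ^d → K and C : K → ℂ^d bounded maps, and σ1 an invertible d×d complex matrix, and assume the Lyapunov equation A 𝕏 + 𝕏 A_ζ + B σ1 C = 0 holds. Then for every λ ∈ ℂ such that λI − A and λI + A_ζ are boundedly invertible, the d×d matrices S(λ) = I − C 𝕏⁻¹ (λI − A)⁻¹ B σ1 and T(λ) = I + C (λI + A_ζ)⁻¹ 𝕏⁻¹ B σ1 are mutually inverse: S(λ) T(λ) = I and T(λ) S(λ) = I. -/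
noncomputable section

open ContinuousLinearMap

/-- The coefficient space `ℂ^d`. -/
abbrev Ed (d : ℕ) : Type := EuclideanSpace ℂ (Fin d)

/-- A `d × d` complex matrix viewed as a continuous linear map on `ℂ^d`. -/
def m2c {d : ℕ} (σ : Matrix (Fin d) (Fin d) ℂ) : Ed d →L[ℂ] Ed d :=
  Matrix.toEuclideanCLM (𝕜 := ℂ) σ

/-- A continuous linear map on `ℂ^d` viewed as a `d × d` complex matrix. -/
def c2m {d : ℕ} (T : Ed d →L[ℂ] Ed d) : Matrix (Fin d) (Fin d) ℂ :=
  (Matrix.toEuclideanCLM (𝕜 := ℂ)).symm T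

/-- Partial derivative in the first (space) variable. -/
def pdx {M : Type*} [NormedAddCommGroup M] [NormedSpace ℝ M]
    (F : ℝ × ℝ → M) (p : ℝ × ℝ) : M :=
  deriv (fun x => F (x, p.2)) p.1

/-- Partial derivative in the second (time) variable. -/
def pdt {M : Type*} [NormedAddCommGroup M] [NormedSpace ℝ M]
    (F : ℝ × ℝ → M) (p : ℝ × ℝ) : M :=
  deriv (fun t => F (p.1, t)) p.2

/-- Entrywise partial derivative in `x` of a matrix-valued function. -/
def pdxM {d : ℕ} (F : ℝ × ℝ → Matrix (Fin d) (Fin d) ℂ) (p : ℝ × ℝ) :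
    Matrix (Fin d) (Fin d) ℂ :=
  Matrix.of fun i j => pdx (fun q => F q i j) p

/-- Entrywise partial derivative in `t` of a matrix-valued function. -/
def pdtM {d : ℕ} (F : ℝ × ℝ → Matrix (Fin d) (Fin d) ℂ) (p : ℝ × ℝ) :
    Matrix (Fin d) (Fin d) ℂ :=
  Matrix.of fun i j => pdt (fun q => F q i j) p

/-- A regular vessel with inner (Krein/Hilbert) space `K` and coefficient space `ℂ^d`. -/
structure Vessel (K : Type*) [NormedAddCommGroup K] [InnerProductSpace ℂ K]
    [CompleteSpace K] (d : ℕ) where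
  Ω : Set (ℝ × ℝ)
  hΩ : IsOpen Ω
  A : K →L[ℂ] K
  Aζ : K →L[ℂ] K
  B : ℝ × ℝ → Ed d →L[ℂ] K
  C : ℝ × ℝ → K →L[ℂ] Ed d
  X : ℝ × ℝ → K →L[ℂ] K
  /-- pointwise inverse of `X` -/
  Xi : ℝ × ℝ → K →L[ℂ] K
  σ1 : Matrix (Fin d) (Fin d) ℂ
  σ2 : Matrix (Fin d) (Fin d) ℂ
  γ : Matrix (Fin d) (Fin d) ℂ
  γs : ℝ × ℝ → Matrix (Fin d) (Fin d) ℂ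
  hσ1 : IsUnit σ1
  smoothB : ContDiffOn ℝ 2 B Ω
  smoothC : ContDiffOn ℝ 2 C Ω
  smoothX : ContDiffOn ℝ 2 X Ω
  hXinv : ∀ p ∈ Ω, X p ∘L Xi p = (1 : K →L[ℂ] K) ∧ Xi p ∘L X p = (1 : K →L[ℂ] K)
  eqBx : ∀ p ∈ Ω,
    pdx B p ∘L m2c σ1 + A ∘L B p ∘L m2c σ2 + B p ∘L m2c γ = 0
  eqBt : ∀ p ∈ Ω, pdt B p = Complex.I • (A ∘L pdx B p)
  eqCx : ∀ p ∈ Ω,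
    m2c σ1 ∘L pdx C p + m2c σ2 ∘L C p ∘L Aζ - m2c γ ∘L C p = 0
  eqCt : ∀ p ∈ Ω, pdt C p = (-Complex.I) • (pdx C p ∘L Aζ)
  eqXx : ∀ p ∈ Ω, pdx X p = B p ∘L m2c σ2 ∘L C p
  eqXt : ∀ p ∈ Ω, pdt X p =
    Complex.I • (A ∘L B p ∘L m2c σ2 ∘L C p) -
      Complex.I • (B p ∘L m2c σ2 ∘L C p ∘L Aζ) +
      Complex.I • (B p ∘L m2c γ ∘L C p)
  eqLyap : ∀ p ∈ Ω, A ∘L X p + X p ∘L Aζ + B p ∘L m2c σ1 ∘L C p = 0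
  eqLink : ∀ p ∈ Ω, γs p =
    γ + σ2 * c2m (C p ∘L Xi p ∘L B p) * σ1 - σ1 * c2m (C p ∘L Xi p ∘L B p) * σ2

/-- The `n`-th moment `H_n = C 𝕏⁻¹ Aⁿ B` of a vessel, as a `d × d` matrix. -/
def Vessel.H {K : Type*} [NormedAddCommGroup K] [InnerProductSpace ℂ K]
    [CompleteSpace K] {d : ℕ} (V : Vessel K d) (n : ℕ) (p : ℝ × ℝ) :
    Matrix (Fin d) (Fin d) ℂ :=
  c2m (V.C p ∘L V.Xi p ∘L (V.A ^ n) ∘L V.B p)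

/-- the transfer function and its Schur-complement inverse are mutually
inverse, given the Lyapunov equation. -/
theorem transfer_function_inverse {K : Type*} [NormedAddCommGroup K]
    [InnerProductSpace ℂ K] [CompleteSpace K] {d : ℕ}
    (A Aζ X Xi : K →L[ℂ] K)
    (hX1 : X ∘L Xi = 1) (hX2 : Xi ∘L X = 1)
    (B : Ed d →L[ℂ] K) (C : K →L[ℂ] Ed d)
    (σ1 : Matrix (Fin d) (Fin d) ℂ) (hσ1 : IsUnit σ1)
    (hLyap : A ∘L X + X ∘L Aζ + B ∘L m2c σ1 ∘L C = 0)
    (lam : ℂ) (RA RZ : K →L[ℂ] K)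
    (hRA1 : (lam • (1 : K →L[ℂ] K) - A) ∘L RA = 1)
    (hRA2 : RA ∘L (lam • (1 : K →L[ℂ] K) - A) = 1)
    (hRZ1 : (lam • (1 : K →L[ℂ] K) + Aζ) ∘L RZ = 1)
    (hRZ2 : RZ ∘L (lam • (1 : K →L[ℂ] K) + Aζ) = 1) :
    (1 - c2m (C ∘L Xi ∘L RA ∘L B) * σ1) * (1 + c2m (C ∘L RZ ∘L Xi ∘L B) * σ1) = 1 ∧
    (1 + c2m (C ∘L RZ ∘L Xi ∘L B) * σ1) * (1 - c2m (C ∘L Xi ∘L RA ∘L B) * σ1) = 1 := by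
  set a : K →L[ℂ] K := lam • (1 : K →L[ℂ] K) - A with ha
  set z : K →L[ℂ] K := lam • (1 : K →L[ℂ] K) + Aζ with hz
  -- cancellation lemmas
  have cRA : ∀ (T : Ed d →L[ℂ] K), RA ∘L (a ∘L T) = T := by
    intro T; rw [← ContinuousLinearMap.comp_assoc, hRA2]; rfl
  have caRA : ∀ (T : Ed d →L[ℂ] K), a ∘L (RA ∘L T) = T := by
    intro T; rw [← ContinuousLinearMap.comp_assoc, hRA1]; rfl
  have cRZ : ∀ (T : Ed d →L[ℂ] K), z ∘L (RZ ∘L T) = T := by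
    intro T; rw [← ContinuousLinearMap.comp_assoc, hRZ1]; rfl
  have cRZ' : ∀ (T : Ed d →L[ℂ] K), RZ ∘L (z ∘L T) = T := by
    intro T; rw [← ContinuousLinearMap.comp_assoc, hRZ2]; rfl
  have cXiX : ∀ (T : Ed d →L[ℂ] K), Xi ∘L (X ∘L T) = T := by
    intro T; rw [← ContinuousLinearMap.comp_assoc, hX2]; rfl
  have cXXi : ∀ (T : Ed d →L[ℂ] K), X ∘L (Xi ∘L T) = T := by
    intro T; rw [← ContinuousLinearMap.comp_assoc, hX1]; rfl
  -- Lyapunov rearranged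
  have hW : B ∘L (m2c σ1 ∘L C) = a ∘L X - X ∘L z := by
    have h : B ∘L m2c σ1 ∘L C = -(A ∘L X + X ∘L Aζ) :=
      eq_neg_of_add_eq_zero_right hLyap
    rw [h, ha, hz, ContinuousLinearMap.sub_comp, ContinuousLinearMap.comp_add,
      ContinuousLinearMap.smul_comp, ContinuousLinearMap.comp_smul]
    simp only [ContinuousLinearMap.one_def, ContinuousLinearMap.id_comp,
      ContinuousLinearMap.comp_id]
    abel
  have hW2 : ∀ (T : Ed d →L[ℂ] K),
      B ∘L (m2c σ1 ∘L (C ∘L T)) = a ∘L (X ∘L T) - X ∘L (z ∘L T) := by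
    intro T
    calc B ∘L (m2c σ1 ∘L (C ∘L T)) = (B ∘L (m2c σ1 ∘L C)) ∘L T := by
          simp only [ContinuousLinearMap.comp_assoc]
      _ = a ∘L (X ∘L T) - X ∘L (z ∘L T) := by
          rw [hW, ContinuousLinearMap.sub_comp]
          simp only [ContinuousLinearMap.comp_assoc]
  have key1 : B ∘L (m2c σ1 ∘L (C ∘L (RZ ∘L (Xi ∘L B)))) =
      a ∘L (X ∘L (RZ ∘L (Xi ∘L B))) - X ∘L (Xi ∘L B) := by
    rw [hW2, cRZ]
  have key1' : Xi ∘L (RA ∘L (B ∘L (m2c σ1 ∘L (C ∘L (RZ ∘L (Xi ∘L B)))))) =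
      RZ ∘L (Xi ∘L B) - Xi ∘L (RA ∘L B) := by
    rw [key1, ContinuousLinearMap.comp_sub, ContinuousLinearMap.comp_sub,
      cRA, cXiX, cXXi]
  have key2' : RZ ∘L (Xi ∘L (B ∘L (m2c σ1 ∘L (C ∘L (Xi ∘L (RA ∘L B)))))) =
      RZ ∘L (Xi ∘L B) - Xi ∘L (RA ∘L B) := by
    rw [hW2, cXXi, caRA, ContinuousLinearMap.comp_sub, ContinuousLinearMap.comp_sub,
      cXiX, cRZ']
  -- matrix-level facts
  have hc2m_mul : ∀ (P Q : Ed d →L[ℂ] Ed d), c2m (P ∘L Q) = c2m P * c2m Q := by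
    intro P Q
    rw [← ContinuousLinearMap.mul_def]
    exact map_mul _ _ _
  have hc2m_m2c : c2m (m2c σ1) = σ1 := StarAlgEquiv.symm_apply_apply _ _
  have hc2m_sub : ∀ (P Q : Ed d →L[ℂ] Ed d), c2m (P - Q) = c2m P - c2m Q := by
    intro P Q; exact map_sub (Matrix.toEuclideanCLM (𝕜 := ℂ)).symm P Q
  have hPQ : c2m (C ∘L Xi ∘L RA ∘L B) * σ1 * c2m (C ∘L RZ ∘L Xi ∘L B) =
      c2m (C ∘L RZ ∘L Xi ∘L B) - c2m (C ∘L Xi ∘L RA ∘L B) := by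
    rw [← hc2m_m2c, ← hc2m_mul, ← hc2m_mul, ← hc2m_sub]
    apply congrArg
    calc ((C ∘L Xi ∘L RA ∘L B) ∘L m2c σ1) ∘L (C ∘L RZ ∘L Xi ∘L B)
        = C ∘L (Xi ∘L (RA ∘L (B ∘L (m2c σ1 ∘L (C ∘L (RZ ∘L (Xi ∘L B))))))) := by
          simp only [ContinuousLinearMap.comp_assoc]
      _ = C ∘L (RZ ∘L (Xi ∘L B)) - C ∘L (Xi ∘L (RA ∘L B)) := by
          rw [key1', ContinuousLinearMap.comp_sub]
      _ = C ∘L RZ ∘L Xi ∘L B - C ∘L Xi ∘L RA ∘L B := rfl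
  have hQP : c2m (C ∘L RZ ∘L Xi ∘L B) * σ1 * c2m (C ∘L Xi ∘L RA ∘L B) =
      c2m (C ∘L RZ ∘L Xi ∘L B) - c2m (C ∘L Xi ∘L RA ∘L B) := by
    rw [← hc2m_m2c, ← hc2m_mul, ← hc2m_mul, ← hc2m_sub]
    apply congrArg
    calc ((C ∘L RZ ∘L Xi ∘L B) ∘L m2c σ1) ∘L (C ∘L Xi ∘L RA ∘L B)
        = C ∘L (RZ ∘L (Xi ∘L (B ∘L (m2c σ1 ∘L (C ∘L (Xi ∘L (RA ∘L B))))))) := by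
          simp only [ContinuousLinearMap.comp_assoc]
      _ = C ∘L (RZ ∘L (Xi ∘L B)) - C ∘L (Xi ∘L (RA ∘L B)) := by
          rw [key2', ContinuousLinearMap.comp_sub]
      _ = C ∘L RZ ∘L Xi ∘L B - C ∘L Xi ∘L RA ∘L B := rfl
  set p := c2m (C ∘L Xi ∘L RA ∘L B) with hp
  set q := c2m (C ∘L RZ ∘L Xi ∘L B) with hq
  constructor
  · have e1 : p * σ1 * (q * σ1) = (q - p) * σ1 := by
      rw [← mul_assoc, hPQ]
    rw [sub_mul, one_mul, mul_add, mul_one, e1, sub_mul]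
    abel
  · have e2 : q * σ1 * (p * σ1) = (q - p) * σ1 := by
      rw [← mul_assoc, hQP]
    rw [add_mul, one_mul, mul_sub, mul_one, e2, sub_mul]
    abel
end
end

section
/- Let 𝔙 be a regular vessel. Then for every n ≥ 0, the moments of 𝔙 satisfy on Ω the recurrence σ1⁻¹ σ2 H_{n+1} − H_{n+1} σ2 σ1⁻¹ = ∂_x H_n − σ1⁻¹ γ_* H_n + H_n γ σ1⁻¹. -/
noncomputable section

open ContinuousLinearMap

/-! ### Auxiliary lemmas -/

lemma c2m_comp {d : ℕ} (S T : Ed d →L[ℂ] Ed d) : c2m (S ∘L T) = c2m S * c2m T := by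
  rw [← ContinuousLinearMap.mul_def]; exact map_mul _ S T

lemma c2m_m2c {d : ℕ} (σ : Matrix (Fin d) (Fin d) ℂ) : c2m (m2c σ) = σ :=
  StarAlgEquiv.symm_apply_apply _ _

lemma c2m_add {d : ℕ} (S T : Ed d →L[ℂ] Ed d) : c2m (S + T) = c2m S + c2m T :=
  map_add _ S T

lemma c2m_sub {d : ℕ} (S T : Ed d →L[ℂ] Ed d) : c2m (S - T) = c2m S - c2m T :=
  map_sub _ S T

lemma m2c_mul_apply {d : ℕ} (σ τ : Matrix (Fin d) (Fin d) ℂ) (v : Ed d) :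
    m2c (σ * τ) v = m2c σ (m2c τ v) := by
  rw [show m2c (σ * τ) = m2c σ ∘L m2c τ by
    rw [← ContinuousLinearMap.mul_def]; exact map_mul _ _ _]
  rfl

/-- The `(i,j)` entry of `c2m` as a continuous linear functional. -/
def entryCLM {d : ℕ} (i j : Fin d) : (Ed d →L[ℂ] Ed d) →L[ℂ] ℂ :=
  LinearMap.toContinuousLinearMap
    { toFun := fun T => c2m T i j
      map_add' := by intro S T; simp [c2m]
      map_smul' := by intro a T; simp [c2m] }

lemma entryCLM_apply {d : ℕ} (i j : Fin d) (T : Ed d →L[ℂ] Ed d) :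
    entryCLM i j T = c2m T i j := by
  simp [entryCLM]
  rfl

/-- Derivative of a pointwise two-sided inverse. -/
lemma hasDerivAt_pointwise_inverse {K : Type*} [NormedAddCommGroup K]
    [InnerProductSpace ℂ K] [CompleteSpace K]
    (X Xi : ℝ → K →L[ℂ] K) (x : ℝ) (D : K →L[ℂ] K)
    (hX : HasDerivAt X D x)
    (hinv : ∀ᶠ y in nhds x, X y ∘L Xi y = 1 ∧ Xi y ∘L X y = 1) :
    HasDerivAt Xi (-(Xi x * D * Xi x)) x := by
  have hux : ∀ y, (X y ∘L Xi y = 1 ∧ Xi y ∘L X y = 1) → IsUnit (X y) := by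
    intro y hy
    exact ⟨⟨X y, Xi y, by rw [ContinuousLinearMap.mul_def]; exact hy.1,
      by rw [ContinuousLinearMap.mul_def]; exact hy.2⟩, rfl⟩
  have hx0 := hinv.self_of_nhds
  set u : (K →L[ℂ] K)ˣ := ⟨X x, Xi x, by rw [ContinuousLinearMap.mul_def]; exact hx0.1,
    by rw [ContinuousLinearMap.mul_def]; exact hx0.2⟩ with hu
  have hfd : HasFDerivAt (Ring.inverse (M₀ := K →L[ℂ] K))
      (-(mulLeftRight ℂ _ (↑u⁻¹)) (↑u⁻¹)) (↑u) := hasFDerivAt_ringInverse u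
  have hcomp : HasDerivAt (fun y => Ring.inverse (X y))
      ((((-(mulLeftRight ℂ _ (↑u⁻¹)) (↑u⁻¹)).restrictScalars ℝ)) D) x :=
    (hfd.restrictScalars ℝ).comp_hasDerivAt x hX
  have hval : ((((-(mulLeftRight ℂ _ (↑u⁻¹)) (↑u⁻¹)).restrictScalars ℝ)) D)
      = -(Xi x * D * Xi x) := by
    simp only [mulLeftRight_apply, ContinuousLinearMap.neg_apply,
      ContinuousLinearMap.coe_restrictScalars']
    rfl
  rw [hval] at hcomp
  refine hcomp.congr_of_eventuallyEq ?_
  filter_upwards [hinv] with y hy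
  obtain ⟨v, hv⟩ := hux y hy
  have hR : Ring.inverse (X y) = ↑v⁻¹ := by rw [← hv, Ring.inverse_unit]
  have h1 : (↑v : K →L[ℂ] K) * Xi y = 1 := by
    rw [hv, ContinuousLinearMap.mul_def]; exact hy.1
  calc Xi y = ↑v⁻¹ * (↑v * Xi y) := by rw [← mul_assoc, Units.inv_mul, one_mul]
    _ = Ring.inverse (X y) := by rw [h1, mul_one, hR]

lemma hasDerivAt_clm_comp' {E F G : Type*} [NormedAddCommGroup E] [NormedSpace ℂ E]
    [NormedAddCommGroup F] [NormedSpace ℂ F] [NormedAddCommGroup G] [NormedSpace ℂ G]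
    {c : ℝ → F →L[ℂ] G} {c' : F →L[ℂ] G} {d : ℝ → E →L[ℂ] F} {d' : E →L[ℂ] F} {x : ℝ}
    (hc : HasDerivAt c c' x) (hd : HasDerivAt d d' x) :
    HasDerivAt (fun y => (c y).comp (d y)) (c'.comp (d x) + (c x).comp d') x := by
  have hbil : IsBoundedBilinearMap ℝ
      (fun q : (F →L[ℂ] G) × (E →L[ℂ] F) => q.1.comp q.2) :=
    { add_left := fun S₁ S₂ T => by ext v; simp
      smul_left := fun r S T => by ext v; simp
      add_right := fun S T₁ T₂ => by ext v; simp
      smul_right := fun r S T => by ext v; simp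
      bound := ⟨1, one_pos, fun S T => by
        simpa using ContinuousLinearMap.opNorm_comp_le S T⟩ }
  have h := (hbil.hasFDerivAt (c x, d x)).comp_hasDerivAt x (hc.prodMk hd)
  refine h.congr_deriv ?_
  rw [hbil.deriv_apply]
  simp [add_comm]

set_option maxHeartbeats 2000000 in
/-- the moment recurrence in `x`. -/
theorem moment_recurrence_x {K : Type*} [NormedAddCommGroup K]
    [InnerProductSpace ℂ K] [CompleteSpace K] {d : ℕ} (V : Vessel K d) :
    ∀ n : ℕ, ∀ p ∈ V.Ω,
      V.σ1⁻¹ * V.σ2 * V.H (n + 1) p - V.H (n + 1) p * V.σ2 * V.σ1⁻¹ =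
        pdxM (V.H n) p - V.σ1⁻¹ * V.γs p * V.H n p + V.H n p * V.γ * V.σ1⁻¹ := by
  intro n p hp
  -- basic invertibility facts about σ1
  have hdet : IsUnit V.σ1.det := (Matrix.isUnit_iff_isUnit_det _).mp V.hσ1
  have hs1inv : V.σ1⁻¹ * V.σ1 = 1 := Matrix.nonsing_inv_mul _ hdet
  have hs1inv' : V.σ1 * V.σ1⁻¹ = 1 := Matrix.mul_nonsing_inv _ hdet
  have hs1i : ∀ u : Ed d, m2c V.σ1⁻¹ (m2c V.σ1 u) = u := by
    intro u; rw [← m2c_mul_apply, hs1inv]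
    show m2c (1 : Matrix (Fin d) (Fin d) ℂ) u = u
    rw [show m2c (1 : Matrix (Fin d) (Fin d) ℂ) = 1 from map_one _]; rfl
  have hs1i' : ∀ u : Ed d, m2c V.σ1 (m2c V.σ1⁻¹ u) = u := by
    intro u; rw [← m2c_mul_apply, hs1inv']
    show m2c (1 : Matrix (Fin d) (Fin d) ℂ) u = u
    rw [show m2c (1 : Matrix (Fin d) (Fin d) ℂ) = 1 from map_one _]; rfl
  -- pointwise inverse facts
  have pXXi : ∀ w : K, V.X p (V.Xi p w) = w := by
    intro w; have := DFunLike.congr_fun (V.hXinv p hp).1 w; simpa using this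
  have pXiX : ∀ w : K, V.Xi p (V.X p w) = w := by
    intro w; have := DFunLike.congr_fun (V.hXinv p hp).2 w; simpa using this
  -- pointwise vessel equations
  have pCx : ∀ w : K, pdx V.C p w
      = m2c V.σ1⁻¹ (m2c V.γ (V.C p w)) - m2c V.σ1⁻¹ (m2c V.σ2 (V.C p (V.Aζ w))) := by
    intro w
    have h := DFunLike.congr_fun (V.eqCx p hp) w
    simp only [ContinuousLinearMap.add_apply, ContinuousLinearMap.sub_apply,
      ContinuousLinearMap.comp_apply, ContinuousLinearMap.zero_apply] at h
    have h3 : m2c V.σ1 (pdx V.C p w)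
        = m2c V.γ (V.C p w) - m2c V.σ2 (V.C p (V.Aζ w)) :=
      eq_sub_of_add_eq (sub_eq_zero.mp h)
    calc pdx V.C p w = m2c V.σ1⁻¹ (m2c V.σ1 (pdx V.C p w)) := (hs1i _).symm
      _ = _ := by rw [h3, map_sub]
  have pBx : ∀ u : Ed d, pdx V.B p u
      = -(V.A (V.B p (m2c V.σ2 (m2c V.σ1⁻¹ u)))) - V.B p (m2c V.γ (m2c V.σ1⁻¹ u)) := by
    intro u
    have h := DFunLike.congr_fun (V.eqBx p hp) (m2c V.σ1⁻¹ u)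
    simp only [ContinuousLinearMap.add_apply, ContinuousLinearMap.comp_apply,
      ContinuousLinearMap.zero_apply] at h
    rw [hs1i'] at h
    refine eq_of_sub_eq_zero ?_
    rw [show pdx V.B p u
        - (-(V.A (V.B p (m2c V.σ2 (m2c V.σ1⁻¹ u)))) - V.B p (m2c V.γ (m2c V.σ1⁻¹ u)))
        = pdx V.B p u + V.A (V.B p (m2c V.σ2 (m2c V.σ1⁻¹ u)))
          + V.B p (m2c V.γ (m2c V.σ1⁻¹ u)) from by abel]
    exact h
  have pAζ : ∀ w : K, V.Aζ (V.Xi p w)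
      = -(V.Xi p (V.A w)) - V.Xi p (V.B p (m2c V.σ1 (V.C p (V.Xi p w)))) := by
    intro w
    have h := DFunLike.congr_fun (V.eqLyap p hp) (V.Xi p w)
    simp only [ContinuousLinearMap.add_apply, ContinuousLinearMap.comp_apply,
      ContinuousLinearMap.zero_apply] at h
    rw [pXXi] at h
    have h2 : V.X p (V.Aζ (V.Xi p w))
        = -(V.A w) - V.B p (m2c V.σ1 (V.C p (V.Xi p w))) := by
      refine eq_of_sub_eq_zero ?_
      rw [show V.X p (V.Aζ (V.Xi p w))
          - (-(V.A w) - V.B p (m2c V.σ1 (V.C p (V.Xi p w))))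
          = V.A w + V.X p (V.Aζ (V.Xi p w))
            + V.B p (m2c V.σ1 (V.C p (V.Xi p w))) from by abel]
      exact h
    calc V.Aζ (V.Xi p w) = V.Xi p (V.X p (V.Aζ (V.Xi p w))) := (pXiX _).symm
      _ = _ := by rw [h2, map_sub, map_neg]
  have pXx : ∀ w : K, pdx V.X p w = V.B p (m2c V.σ2 (V.C p w)) := by
    intro w; rw [V.eqXx p hp]; rfl
  -- powers of A, pointwise
  have hpow : ∀ y : K, (V.A ^ (n + 1)) y = V.A ((V.A ^ n) y) := by
    intro y
    have : V.A ^ (n + 1) = V.A * V.A ^ n := pow_succ' V.A n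
    rw [this]; rfl
  have hpowc : ∀ y : K, (V.A ^ n) (V.A y) = V.A ((V.A ^ n) y) := by
    intro y
    have : V.A ^ n * V.A = V.A * V.A ^ n := (pow_succ V.A n).symm.trans (pow_succ' V.A n)
    have := DFunLike.congr_fun this y
    simpa [ContinuousLinearMap.mul_apply] using this
  -- differentiability along the horizontal line
  have hline : DifferentiableAt ℝ (fun x : ℝ => (x, p.2)) p.1 :=
    differentiableAt_id.prodMk (differentiableAt_const _)
  have hmem : {x : ℝ | (x, p.2) ∈ V.Ω} ∈ nhds p.1 := by
    have hcont : Continuous (fun x : ℝ => (x, p.2)) := by continuity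
    exact (V.hΩ.preimage hcont).mem_nhds (by simpa using hp)
  have hlineval : (fun x : ℝ => (x, p.2)) p.1 = p := by simp
  have diffAt : ∀ {M : Type _} [NormedAddCommGroup M] [NormedSpace ℝ M],
      ∀ (F : ℝ × ℝ → M), ContDiffOn ℝ 2 F V.Ω →
      DifferentiableAt ℝ (fun x => F (x, p.2)) p.1 := by
    intro M _ _ F hF
    have h1 : DifferentiableAt ℝ F p :=
      (hF.differentiableOn two_ne_zero).differentiableAt (V.hΩ.mem_nhds hp)
    have h1' : DifferentiableAt ℝ F ((fun x : ℝ => (x, p.2)) p.1) := by rwa [hlineval]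
    exact h1'.comp p.1 hline
  have hc : HasDerivAt (fun x => V.C (x, p.2)) (pdx V.C p) p.1 :=
    (diffAt V.C V.smoothC).hasDerivAt
  have hb : HasDerivAt (fun x => V.B (x, p.2)) (pdx V.B p) p.1 :=
    (diffAt V.B V.smoothB).hasDerivAt
  have hx : HasDerivAt (fun x => V.X (x, p.2)) (pdx V.X p) p.1 :=
    (diffAt V.X V.smoothX).hasDerivAt
  have hxi : HasDerivAt (fun x => V.Xi (x, p.2))
      (-(V.Xi p * pdx V.X p * V.Xi p)) p.1 := by
    have hev : ∀ᶠ y in nhds p.1,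
        V.X (y, p.2) ∘L V.Xi (y, p.2) = 1 ∧ V.Xi (y, p.2) ∘L V.X (y, p.2) = 1 := by
      filter_upwards [hmem] with y hy; exact V.hXinv _ hy
    exact hasDerivAt_pointwise_inverse (fun x => V.X (x, p.2)) (fun x => V.Xi (x, p.2))
      p.1 (pdx V.X p) hx hev
  have hb0 : HasDerivAt (fun x => (V.A ^ n) ∘L V.B (x, p.2)) ((V.A ^ n) ∘L pdx V.B p) p.1 := by
    have := hasDerivAt_clm_comp' (hasDerivAt_const (𝕜 := ℝ) p.1 (V.A ^ n)) hb
    simpa using this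
  have h1 := hasDerivAt_clm_comp' hxi hb0
  have h2 := hasDerivAt_clm_comp' hc h1
  have key : pdxM (V.H n) p = c2m
      ((pdx V.C p) ∘L (V.Xi p ∘L ((V.A ^ n) ∘L V.B p)) +
        V.C p ∘L ((-(V.Xi p * pdx V.X p * V.Xi p)) ∘L ((V.A ^ n) ∘L V.B p) +
          V.Xi p ∘L ((V.A ^ n) ∘L pdx V.B p))) := by
    ext i j
    have hψ := ((entryCLM i j).restrictScalars ℝ).hasFDerivAt.comp_hasDerivAt p.1 h2
    have h0 : pdxM (V.H n) p i j = deriv (fun x => V.H n (x, p.2) i j) p.1 := rfl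
    rw [h0]
    have heq : (fun x => V.H n (x, p.2) i j)
        = (⇑((entryCLM i j).restrictScalars ℝ) ∘
          (fun x => (V.C (x, p.2)).comp
            ((V.Xi (x, p.2)).comp (((V.A ^ n)).comp (V.B (x, p.2)))))) := by
      funext x
      simp [Vessel.H, Function.comp, entryCLM_apply,
        ContinuousLinearMap.coe_restrictScalars']
    rw [heq, hψ.deriv]
    simp [entryCLM_apply, ContinuousLinearMap.coe_restrictScalars']
  rw [key]
  have hD : ((pdx V.C p) ∘L (V.Xi p ∘L ((V.A ^ n) ∘L V.B p)) +
        V.C p ∘L ((-(V.Xi p * pdx V.X p * V.Xi p)) ∘L ((V.A ^ n) ∘L V.B p) +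
          V.Xi p ∘L ((V.A ^ n) ∘L pdx V.B p)))
      = m2c (V.σ1⁻¹ * V.γ) ∘L (V.C p ∘L V.Xi p ∘L (V.A ^ n) ∘L V.B p)
        + m2c (V.σ1⁻¹ * V.σ2) ∘L (V.C p ∘L V.Xi p ∘L (V.A ^ (n + 1)) ∘L V.B p)
        + m2c (V.σ1⁻¹ * V.σ2) ∘L ((V.C p ∘L V.Xi p ∘L V.B p) ∘L
            (m2c V.σ1 ∘L (V.C p ∘L V.Xi p ∘L (V.A ^ n) ∘L V.B p)))
        - (V.C p ∘L V.Xi p ∘L V.B p) ∘L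
            (m2c V.σ2 ∘L (V.C p ∘L V.Xi p ∘L (V.A ^ n) ∘L V.B p))
        - (V.C p ∘L V.Xi p ∘L (V.A ^ (n + 1)) ∘L V.B p) ∘L m2c (V.σ2 * V.σ1⁻¹)
        - (V.C p ∘L V.Xi p ∘L (V.A ^ n) ∘L V.B p) ∘L m2c (V.γ * V.σ1⁻¹) := by
    refine ContinuousLinearMap.ext fun v => ?_
    simp only [ContinuousLinearMap.add_apply, ContinuousLinearMap.sub_apply,
      ContinuousLinearMap.neg_apply, ContinuousLinearMap.comp_apply,
      ContinuousLinearMap.mul_apply, pCx, pBx, pAζ, pXx, hpow, hpowc,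
      m2c_mul_apply, map_add, map_sub, map_neg]
    abel
  rw [hD]
  simp only [c2m_add, c2m_sub, c2m_comp, c2m_m2c, V.eqLink p hp, Vessel.H]
  have hcancel : ∀ M : Matrix (Fin d) (Fin d) ℂ, V.σ1⁻¹ * (V.σ1 * M) = M := by
    intro M; rw [← mul_assoc, hs1inv, one_mul]
  simp only [mul_add, add_mul, mul_sub, sub_mul, mul_assoc, hcancel]
  abel
end
end

section
/- (External transformation of the second kind.) Let 𝔙 = (A_ζ, C, 𝕏, B, A; σ1, σ2, γ, γ_*; K, ℂ^d, Ω) be a regular vessel and let k2, k ∈ ℂ. Define the operator-valued functions V(x,t) = exp(−(A k2 + k)(x·I + i t A)) and U(x,t) = exp(−(A_ζ k2 − k)(x·I − i t A_ζ)) (exponentials of bounded operators on K; V(x,t) commutes with A and U(x,t) commutes with A_ζ), and set B̃(x,t) = V(x,t) B(x,t), C̃(x,t) = C(x,t) U(x,t), 𝕏̃(x,t) = V(x,t) 𝕏(x,t) U(x,t), σ̃2 = σ2 + k2 σ1, γ̃ = γ + k σ1, with γ̃_* given by the linkage condition for the new data. Then 𝔙̃ = (A_ζ, C̃, 𝕏̃,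 B̃, A; σ1, σ̃2, γ̃, γ̃_*; K, ℂ^d, Ω) is again a regular vessel, and the first moments coincide: H̃_0(x,t) = C̃(x,t) 𝕏̃(x,t)⁻¹ B̃(x,t) = C(x,t) 𝕏(x,t)⁻¹ B(x,t) = H_0(x,t) on Ω. -/
noncomputable section

open ContinuousLinearMap

set_option linter.unusedSectionVars false
set_option maxHeartbeats 1000000


namespace ExtAux

open NormedSpace

variable {K : Type*} [NormedAddCommGroup K] [InnerProductSpace ℂ K] [CompleteSpace K]
variable {E F G H : Type*} [NormedAddCommGroup E] [NormedSpace ℂ E]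
  [NormedAddCommGroup F] [NormedSpace ℂ F] [NormedAddCommGroup G] [NormedSpace ℂ G]
  [NormedAddCommGroup H] [NormedSpace ℂ H]

theorem isBBM_comp : IsBoundedBilinearMap ℝ
    (fun p : (F →L[ℂ] G) × (E →L[ℂ] F) => p.1.comp p.2) where
  add_left f g h := add_comp f g h
  smul_left c f g := by ext v; simp
  add_right f g h := comp_add f g h
  smul_right c f g := by ext v; simp
  bound := ⟨1, one_pos, fun f g => by simpa using opNorm_comp_le f g⟩

theorem _root_.HasDerivAt.clm_comp' {c : ℝ → F →L[ℂ] G} {d : ℝ → E →L[ℂ] F}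
    {c' : F →L[ℂ] G} {d' : E →L[ℂ] F} {x : ℝ}
    (hc : HasDerivAt c c' x) (hd : HasDerivAt d d' x) :
    HasDerivAt (fun y => (c y).comp (d y)) (c'.comp (d x) + (c x).comp d') x := by
  have h := (isBBM_comp.hasFDerivAt (c x, d x)).comp x (hc.hasFDerivAt.prodMk hd.hasFDerivAt)
  have h2 := h.hasDerivAt
  simpa [Function.comp_def, IsBoundedBilinearMap.deriv_apply, add_comm] using h2

theorem _root_.HasDerivAt.comp_ofReal' {A : Type*} [NormedAddCommGroup A] [NormedSpace ℂ A]
    {f : ℂ → A} {f' : A} {x : ℝ} (hf : HasDerivAt f f' (x : ℂ)) :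
    HasDerivAt (fun y : ℝ => f (y : ℂ)) f' x := by
  have h1 := (hf.hasFDerivAt.restrictScalars ℝ).comp x Complex.ofRealCLM.hasFDerivAt
  have h2 := h1.hasDerivAt
  simpa [Function.comp_def] using h2

theorem comm_swap {R S : K →L[ℂ] K} (h : Commute S R) (T : E →L[ℂ] K) :
    R ∘L (S ∘L T) = S ∘L (R ∘L T) := by
  rw [← comp_assoc, ← ContinuousLinearMap.mul_def R S, ← h.eq,
    ContinuousLinearMap.mul_def, comp_assoc]

theorem one_comp' (f : E →L[ℂ] K) : (1 : K →L[ℂ] K) ∘L f = f := by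
  rw [one_def, id_comp]

theorem comp_cancel {u v : K →L[ℂ] K} (huv : u ∘L v = 1) (f : K →L[ℂ] F) (g : E →L[ℂ] K) :
    (f ∘L u) ∘L (v ∘L g) = f ∘L g := by
  rw [comp_assoc, ← comp_assoc u v g, huv, one_def, id_comp]

/-- `V(x,t) = exp((x)•P + (t)•Q)`. -/
def Ef (P Q : K →L[ℂ] K) (p : ℝ × ℝ) : K →L[ℂ] K :=
  exp ((p.1 : ℂ) • P + (p.2 : ℂ) • Q)

variable (P Q : K →L[ℂ] K)

instance instNormedAlgebraRatCLM : NormedAlgebra ℚ (K →L[ℂ] K) :=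
  NormedAlgebra.restrictScalars ℚ ℂ _

theorem Ef_commute {R : K →L[ℂ] K} (h1 : Commute P R) (h2 : Commute Q R) (p : ℝ × ℝ) :
    Commute (Ef P Q p) R :=
  ((h1.smul_left _).add_left (h2.smul_left _)).exp_left

theorem Ef_mul_inv (p : ℝ × ℝ) : Ef P Q p * Ef (-P) (-Q) p = 1 := by
  have h : (p.1 : ℂ) • -P + (p.2 : ℂ) • -Q = -((p.1 : ℂ) • P + (p.2 : ℂ) • Q) := by module
  rw [Ef, Ef, h, ← exp_add_of_commute (Commute.neg_right (Commute.refl _)),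
    add_neg_cancel, exp_zero]

theorem Ef_inv_mul (p : ℝ × ℝ) : Ef (-P) (-Q) p * Ef P Q p = 1 := by
  have h : (p.1 : ℂ) • -P + (p.2 : ℂ) • -Q = -((p.1 : ℂ) • P + (p.2 : ℂ) • Q) := by module
  rw [Ef, Ef, h, ← exp_add_of_commute (Commute.neg_left (Commute.refl _)),
    neg_add_cancel, exp_zero]

theorem Ef_hasDerivAt_fst (hPQ : Commute P Q) (x t : ℝ) :
    HasDerivAt (fun y : ℝ => Ef P Q (y, t)) (P * Ef P Q (x, t)) x := by
  have hsplit : ∀ y : ℝ, Ef P Q (y, t) = exp ((y : ℂ) • P) * exp ((t : ℂ) • Q) := fun y =>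
    exp_add_of_commute ((hPQ.smul_left _).smul_right _)
  have hd : HasDerivAt (fun y : ℝ => exp ((y : ℂ) • P)) (P * exp ((x : ℂ) • P)) x :=
    HasDerivAt.comp_ofReal' (f := fun u : ℂ => exp (u • P))
      (hasDerivAt_exp_smul_const' P ((x : ℝ) : ℂ))
  have h2 := hd.mul_const (exp ((t : ℂ) • Q))
  have heq : (fun y : ℝ => Ef P Q (y, t)) =
      fun y : ℝ => exp ((y : ℂ) • P) * exp ((t : ℂ) • Q) := funext hsplit
  rw [heq, hsplit x, ← mul_assoc]
  exact h2

theorem Ef_hasDerivAt_snd (hPQ : Commute P Q) (x t : ℝ) :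
    HasDerivAt (fun s : ℝ => Ef P Q (x, s)) (Q * Ef P Q (x, t)) t := by
  have hsplit : ∀ s : ℝ, Ef P Q (x, s) = exp ((s : ℂ) • Q) * exp ((x : ℂ) • P) := by
    intro s
    rw [Ef, add_comm]
    exact exp_add_of_commute ((hPQ.symm.smul_left _).smul_right _)
  have hd : HasDerivAt (fun s : ℝ => exp ((s : ℂ) • Q)) (Q * exp ((t : ℂ) • Q)) t :=
    HasDerivAt.comp_ofReal' (f := fun u : ℂ => exp (u • Q))
      (hasDerivAt_exp_smul_const' Q ((t : ℝ) : ℂ))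
  have h2 := hd.mul_const (exp ((x : ℂ) • P))
  have heq : (fun s : ℝ => Ef P Q (x, s)) =
      fun s : ℝ => exp ((s : ℂ) • Q) * exp ((x : ℂ) • P) := funext hsplit
  rw [heq, hsplit t, ← mul_assoc]
  exact h2

theorem coe_smul' (r : ℝ) (T : K →L[ℂ] K) : (r : ℂ) • T = r • T := by
  rw [← algebraMap_smul ℂ r T, Complex.coe_algebraMap]

theorem Ef_contDiff : ContDiff ℝ 2 (Ef P Q) := by
  have h1 : ContDiff ℝ 2 (exp : (K →L[ℂ] K) → K →L[ℂ] K) :=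
    contDiff_iff_contDiffAt.2 fun z => (exp_analytic (𝕂 := ℂ) z).contDiffAt.restrict_scalars ℝ
  have h2 : ContDiff ℝ 2 (fun p : ℝ × ℝ => (p.1 : ℂ) • P + (p.2 : ℂ) • Q) := by
    have heq : (fun p : ℝ × ℝ => (p.1 : ℂ) • P + (p.2 : ℂ) • Q) =
        fun p : ℝ × ℝ => p.1 • P + p.2 • Q := by
      funext p; rw [coe_smul', coe_smul']
    rw [heq]
    exact (contDiff_fst.smul contDiff_const).add (contDiff_snd.smul contDiff_const)
  exact h1.comp h2

end ExtAux

section Slice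

theorem slice_fst {M : Type*} [NormedAddCommGroup M] [NormedSpace ℝ M]
    {F : ℝ × ℝ → M} {Ω : Set (ℝ × ℝ)} (hΩ : IsOpen Ω) (hF : ContDiffOn ℝ 2 F Ω)
    {x t : ℝ} (hp : (x, t) ∈ Ω) :
    HasDerivAt (fun y => F (y, t)) (pdx F (x, t)) x := by
  have h1 : DifferentiableAt ℝ F (x, t) :=
    (hF.contDiffAt (hΩ.mem_nhds hp)).differentiableAt two_ne_zero
  have h2 : DifferentiableAt ℝ (fun y : ℝ => F (y, t)) x :=
    h1.comp x (differentiableAt_id.prodMk (differentiableAt_const t))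
  simpa [pdx] using h2.hasDerivAt

theorem slice_snd {M : Type*} [NormedAddCommGroup M] [NormedSpace ℝ M]
    {F : ℝ × ℝ → M} {Ω : Set (ℝ × ℝ)} (hΩ : IsOpen Ω) (hF : ContDiffOn ℝ 2 F Ω)
    {x t : ℝ} (hp : (x, t) ∈ Ω) :
    HasDerivAt (fun s => F (x, s)) (pdt F (x, t)) t := by
  have h1 : DifferentiableAt ℝ F (x, t) :=
    (hF.contDiffAt (hΩ.mem_nhds hp)).differentiableAt two_ne_zero
  have h2 : DifferentiableAt ℝ (fun s : ℝ => F (x, s)) t :=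
    h1.comp t ((differentiableAt_const x).prodMk differentiableAt_id)
  simpa [pdt] using h2.hasDerivAt

end Slice

section M2C

theorem m2c_add {d : ℕ} (a b : Matrix (Fin d) (Fin d) ℂ) : m2c (a + b) = m2c a + m2c b :=
  map_add _ a b

theorem m2c_smul {d : ℕ} (c : ℂ) (a : Matrix (Fin d) (Fin d) ℂ) : m2c (c • a) = c • m2c a :=
  map_smul (Matrix.toEuclideanCLM (𝕜 := ℂ) : _ ≃⋆ₐ[ℂ] _) c a

end M2C

/-- the external transformation of the second kind produces again a
regular vessel, with the same first moment. -/
theorem external_transformation_second_kind {K : Type*} [NormedAddCommGroup K]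
    [InnerProductSpace ℂ K] [CompleteSpace K] {d : ℕ}
    (V₁ : Vessel K d) (k2 k : ℂ)
    (Vop Uop : ℝ × ℝ → K →L[ℂ] K)
    (hVop : ∀ p : ℝ × ℝ, Vop p = NormedSpace.exp
      (-((k2 • V₁.A + k • (1 : K →L[ℂ] K)) *
          ((p.1 : ℂ) • (1 : K →L[ℂ] K) + (Complex.I * (p.2 : ℂ)) • V₁.A))))
    (hUop : ∀ p : ℝ × ℝ, Uop p = NormedSpace.exp
      (-((k2 • V₁.Aζ - k • (1 : K →L[ℂ] K)) *
          ((p.1 : ℂ) • (1 : K →L[ℂ] K) - (Complex.I * (p.2 : ℂ)) • V₁.Aζ)))) :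
    ∃ V₂ : Vessel K d,
      V₂.Ω = V₁.Ω ∧ V₂.A = V₁.A ∧ V₂.Aζ = V₁.Aζ ∧
      V₂.B = (fun p => Vop p ∘L V₁.B p) ∧
      V₂.C = (fun p => V₁.C p ∘L Uop p) ∧
      V₂.X = (fun p => Vop p ∘L V₁.X p ∘L Uop p) ∧
      V₂.σ1 = V₁.σ1 ∧ V₂.σ2 = V₁.σ2 + k2 • V₁.σ1 ∧ V₂.γ = V₁.γ + k • V₁.σ1 ∧
      ∀ p ∈ V₁.Ω, V₂.H 0 p = V₁.H 0 p := by
  obtain ⟨P, hP⟩ : ∃ P : K →L[ℂ] K, P = -(k2 • V₁.A + k • (1 : K →L[ℂ] K)) := ⟨_, rfl⟩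
  obtain ⟨Q, hQ⟩ : ∃ Q : K →L[ℂ] K,
      Q = -(Complex.I • ((k2 • V₁.A + k • (1 : K →L[ℂ] K)) * V₁.A)) := ⟨_, rfl⟩
  obtain ⟨P', hP'⟩ : ∃ P' : K →L[ℂ] K, P' = -(k2 • V₁.Aζ - k • (1 : K →L[ℂ] K)) := ⟨_, rfl⟩
  obtain ⟨Q', hQ'⟩ : ∃ Q' : K →L[ℂ] K,
      Q' = Complex.I • ((k2 • V₁.Aζ - k • (1 : K →L[ℂ] K)) * V₁.Aζ) := ⟨_, rfl⟩
  have hAM : Commute V₁.A (k2 • V₁.A + k • (1 : K →L[ℂ] K)) :=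
    ((Commute.refl V₁.A).smul_right k2).add_right ((Commute.one_right V₁.A).smul_right k)
  have hAP : Commute V₁.A P := by rw [hP]; exact hAM.neg_right
  have hAQ : Commute V₁.A Q := by
    rw [hQ]; exact ((hAM.mul_right (Commute.refl V₁.A)).smul_right _).neg_right
  have hPQ : Commute P Q := by
    rw [hP, hQ]
    exact ((((Commute.refl _).mul_right hAM.symm).smul_right _).neg_right).neg_left
  have hZM : Commute V₁.Aζ (k2 • V₁.Aζ - k • (1 : K →L[ℂ] K)) :=
    ((Commute.refl V₁.Aζ).smul_right k2).sub_right ((Commute.one_right V₁.Aζ).smul_right k)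
  have hZP : Commute V₁.Aζ P' := by rw [hP']; exact hZM.neg_right
  have hZQ : Commute V₁.Aζ Q' := by
    rw [hQ']; exact (hZM.mul_right (Commute.refl V₁.Aζ)).smul_right _
  have hPQ' : Commute P' Q' := by
    rw [hP', hQ']
    exact (((Commute.refl _).mul_right hZM.symm).smul_right _).neg_left
  have hVfun : Vop = ExtAux.Ef P Q := by
    funext p
    rw [hVop p, hP, hQ, ExtAux.Ef]
    congr 1
    simp only [mul_add, add_mul, smul_mul_assoc, mul_smul_comm, mul_one, one_mul, smul_smul]
    module
  have hUfun : Uop = ExtAux.Ef P' Q' := by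
    funext p
    rw [hUop p, hP', hQ', ExtAux.Ef]
    congr 1
    simp only [mul_add, add_mul, mul_sub, sub_mul, smul_mul_assoc, mul_smul_comm, mul_one,
      one_mul, smul_smul]
    module
  have hEA : ∀ p, Commute (ExtAux.Ef P Q p) V₁.A := fun p =>
    ExtAux.Ef_commute P Q hAP.symm hAQ.symm p
  have hEP : ∀ p, Commute (ExtAux.Ef P Q p) P := fun p =>
    ExtAux.Ef_commute P Q (Commute.refl P) hPQ.symm p
  have hEQ : ∀ p, Commute (ExtAux.Ef P Q p) Q := fun p =>
    ExtAux.Ef_commute P Q hPQ (Commute.refl Q) p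
  have hUZ : ∀ p, Commute (ExtAux.Ef P' Q' p) V₁.Aζ := fun p =>
    ExtAux.Ef_commute P' Q' hZP.symm hZQ.symm p
  have hUZc : ∀ p, ExtAux.Ef P' Q' p ∘L V₁.Aζ = V₁.Aζ ∘L ExtAux.Ef P' Q' p := fun p =>
    (hUZ p).eq
  -- derivative formulas
  have hdB : ∀ x t : ℝ, (x, t) ∈ V₁.Ω →
      pdx (fun p => ExtAux.Ef P Q p ∘L V₁.B p) (x, t) =
        (P * ExtAux.Ef P Q (x, t)) ∘L V₁.B (x, t) +
          ExtAux.Ef P Q (x, t) ∘L pdx V₁.B (x, t) := fun x t hp =>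
    ((ExtAux.Ef_hasDerivAt_fst P Q hPQ x t).clm_comp'
      (slice_fst V₁.hΩ V₁.smoothB hp)).deriv
  have hdBt : ∀ x t : ℝ, (x, t) ∈ V₁.Ω →
      pdt (fun p => ExtAux.Ef P Q p ∘L V₁.B p) (x, t) =
        (Q * ExtAux.Ef P Q (x, t)) ∘L V₁.B (x, t) +
          ExtAux.Ef P Q (x, t) ∘L pdt V₁.B (x, t) := fun x t hp =>
    ((ExtAux.Ef_hasDerivAt_snd P Q hPQ x t).clm_comp'
      (slice_snd V₁.hΩ V₁.smoothB hp)).deriv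
  have hdC : ∀ x t : ℝ, (x, t) ∈ V₁.Ω →
      pdx (fun p => V₁.C p ∘L ExtAux.Ef P' Q' p) (x, t) =
        pdx V₁.C (x, t) ∘L ExtAux.Ef P' Q' (x, t) +
          V₁.C (x, t) ∘L (P' * ExtAux.Ef P' Q' (x, t)) := fun x t hp =>
    ((slice_fst V₁.hΩ V₁.smoothC hp).clm_comp'
      (ExtAux.Ef_hasDerivAt_fst P' Q' hPQ' x t)).deriv
  have hdCt : ∀ x t : ℝ, (x, t) ∈ V₁.Ω →
      pdt (fun p => V₁.C p ∘L ExtAux.Ef P' Q' p) (x, t) =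
        pdt V₁.C (x, t) ∘L ExtAux.Ef P' Q' (x, t) +
          V₁.C (x, t) ∘L (Q' * ExtAux.Ef P' Q' (x, t)) := fun x t hp =>
    ((slice_snd V₁.hΩ V₁.smoothC hp).clm_comp'
      (ExtAux.Ef_hasDerivAt_snd P' Q' hPQ' x t)).deriv
  have hdX : ∀ x t : ℝ, (x, t) ∈ V₁.Ω →
      pdx (fun p => ExtAux.Ef P Q p ∘L V₁.X p ∘L ExtAux.Ef P' Q' p) (x, t) =
        (P * ExtAux.Ef P Q (x, t)) ∘L (V₁.X (x, t) ∘L ExtAux.Ef P' Q' (x, t)) +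
          ExtAux.Ef P Q (x, t) ∘L
            (pdx V₁.X (x, t) ∘L ExtAux.Ef P' Q' (x, t) +
              V₁.X (x, t) ∘L (P' * ExtAux.Ef P' Q' (x, t))) := fun x t hp =>
    ((ExtAux.Ef_hasDerivAt_fst P Q hPQ x t).clm_comp'
      ((slice_fst V₁.hΩ V₁.smoothX hp).clm_comp'
        (ExtAux.Ef_hasDerivAt_fst P' Q' hPQ' x t))).deriv
  have hdXt : ∀ x t : ℝ, (x, t) ∈ V₁.Ω →
      pdt (fun p => ExtAux.Ef P Q p ∘L V₁.X p ∘L ExtAux.Ef P' Q' p) (x, t) =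
        (Q * ExtAux.Ef P Q (x, t)) ∘L (V₁.X (x, t) ∘L ExtAux.Ef P' Q' (x, t)) +
          ExtAux.Ef P Q (x, t) ∘L
            (pdt V₁.X (x, t) ∘L ExtAux.Ef P' Q' (x, t) +
              V₁.X (x, t) ∘L (Q' * ExtAux.Ef P' Q' (x, t))) := fun x t hp =>
    ((ExtAux.Ef_hasDerivAt_snd P Q hPQ x t).clm_comp'
      ((slice_snd V₁.hΩ V₁.smoothX hp).clm_comp'
        (ExtAux.Ef_hasDerivAt_snd P' Q' hPQ' x t))).deriv
  refine ⟨{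
    Ω := V₁.Ω
    hΩ := V₁.hΩ
    A := V₁.A
    Aζ := V₁.Aζ
    B := fun p => Vop p ∘L V₁.B p
    C := fun p => V₁.C p ∘L Uop p
    X := fun p => Vop p ∘L V₁.X p ∘L Uop p
    Xi := fun p => ExtAux.Ef (-P') (-Q') p ∘L V₁.Xi p ∘L ExtAux.Ef (-P) (-Q) p
    σ1 := V₁.σ1
    σ2 := V₁.σ2 + k2 • V₁.σ1
    γ := V₁.γ + k • V₁.σ1
    γs := fun p => V₁.γ + k • V₁.σ1 +
      (V₁.σ2 + k2 • V₁.σ1) *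
        c2m ((V₁.C p ∘L Uop p) ∘L
          ((ExtAux.Ef (-P') (-Q') p ∘L V₁.Xi p ∘L ExtAux.Ef (-P) (-Q) p) ∘L
            (Vop p ∘L V₁.B p))) * V₁.σ1 -
      V₁.σ1 *
        c2m ((V₁.C p ∘L Uop p) ∘L
          ((ExtAux.Ef (-P') (-Q') p ∘L V₁.Xi p ∘L ExtAux.Ef (-P) (-Q) p) ∘L
            (Vop p ∘L V₁.B p))) * (V₁.σ2 + k2 • V₁.σ1)
    hσ1 := V₁.hσ1
    smoothB := by
      simp only [hVfun]
      exact ExtAux.isBBM_comp.contDiff.comp_contDiffOn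
        (((ExtAux.Ef_contDiff P Q).contDiffOn).prodMk V₁.smoothB)
    smoothC := by
      simp only [hUfun]
      exact ExtAux.isBBM_comp.contDiff.comp_contDiffOn
        (V₁.smoothC.prodMk ((ExtAux.Ef_contDiff P' Q').contDiffOn))
    smoothX := by
      simp only [hVfun, hUfun]
      exact ExtAux.isBBM_comp.contDiff.comp_contDiffOn
        (((ExtAux.Ef_contDiff P Q).contDiffOn).prodMk
          (ExtAux.isBBM_comp.contDiff.comp_contDiffOn
            (V₁.smoothX.prodMk ((ExtAux.Ef_contDiff P' Q').contDiffOn))))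
    hXinv := by
      intro p hp
      have hx1 : V₁.X p ∘L V₁.Xi p = 1 := (V₁.hXinv p hp).1
      have hx2 : V₁.Xi p ∘L V₁.X p = 1 := (V₁.hXinv p hp).2
      have hu1 : ExtAux.Ef P' Q' p ∘L ExtAux.Ef (-P') (-Q') p = 1 := ExtAux.Ef_mul_inv P' Q' p
      have hu2 : ExtAux.Ef (-P') (-Q') p ∘L ExtAux.Ef P' Q' p = 1 := ExtAux.Ef_inv_mul P' Q' p
      have he1 : ExtAux.Ef P Q p ∘L ExtAux.Ef (-P) (-Q) p = 1 := ExtAux.Ef_mul_inv P Q p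
      have he2 : ExtAux.Ef (-P) (-Q) p ∘L ExtAux.Ef P Q p = 1 := ExtAux.Ef_inv_mul P Q p
      simp only [hVfun, hUfun]
      constructor
      · rw [comp_assoc, ExtAux.comp_cancel hu1,
          ← comp_assoc (V₁.X p) (V₁.Xi p) (ExtAux.Ef (-P) (-Q) p), hx1, ExtAux.one_comp', he1]
      · rw [comp_assoc, ExtAux.comp_cancel he2,
          ← comp_assoc (V₁.Xi p) (V₁.X p) (ExtAux.Ef P' Q' p), hx2, ExtAux.one_comp', hu2]
    eqBx := by
      intro p hp
      obtain ⟨x, t⟩ := p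
      simp only [hVfun]
      rw [hdB x t hp]
      have h1 := congrArg (fun T => ExtAux.Ef P Q (x, t) ∘L T) (V₁.eqBx (x, t) hp)
      simp only [ContinuousLinearMap.mul_def, comp_assoc, comp_add, add_comp, comp_smul,
        smul_comp, comp_neg, neg_comp, comp_sub, sub_comp, comp_zero, zero_comp, m2c_add,
        m2c_smul, ExtAux.one_comp', comp_id, ExtAux.comm_swap (hEA (x, t)),
        ExtAux.comm_swap (hEP (x, t)), ExtAux.comm_swap (hEQ (x, t))] at h1 ⊢
      simp only [hP, hQ, ContinuousLinearMap.mul_def, comp_assoc, comp_add, add_comp,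
        comp_smul, smul_comp, comp_neg, neg_comp, comp_sub, sub_comp, ExtAux.one_comp', comp_id,
        comp_id] at h1 ⊢
      linear_combination (norm := module) h1
    eqBt := by
      intro p hp
      obtain ⟨x, t⟩ := p
      simp only [hVfun]
      rw [hdBt x t hp, hdB x t hp, V₁.eqBt (x, t) hp]
      simp only [ContinuousLinearMap.mul_def, comp_assoc, comp_add, add_comp, comp_smul,
        smul_comp, comp_neg, neg_comp, comp_sub, sub_comp, comp_zero, zero_comp, m2c_add,
        m2c_smul, ExtAux.one_comp', comp_id, ExtAux.comm_swap (hEA (x, t)),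
        ExtAux.comm_swap (hEP (x, t)), ExtAux.comm_swap (hEQ (x, t))]
      simp only [hP, hQ, ContinuousLinearMap.mul_def, comp_assoc, comp_add, add_comp,
        comp_smul, smul_comp, comp_neg, neg_comp, comp_sub, sub_comp, ExtAux.one_comp', comp_id]
      module
    eqCx := by
      intro p hp
      obtain ⟨x, t⟩ := p
      simp only [hUfun]
      rw [hdC x t hp]
      have h1 := congrArg (fun T => T ∘L ExtAux.Ef P' Q' (x, t)) (V₁.eqCx (x, t) hp)
      simp only [ContinuousLinearMap.mul_def, comp_assoc, comp_add, add_comp, comp_smul,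
        smul_comp, comp_neg, neg_comp, comp_sub, sub_comp, comp_zero, zero_comp, m2c_add,
        m2c_smul, ExtAux.one_comp', comp_id, hUZc] at h1 ⊢
      simp only [hP', hQ', ContinuousLinearMap.mul_def, comp_assoc, comp_add, add_comp,
        comp_smul, smul_comp, comp_neg, neg_comp, comp_sub, sub_comp, ExtAux.one_comp', comp_id,
        comp_id, hUZc] at h1 ⊢
      linear_combination (norm := module) h1
    eqCt := by
      intro p hp
      obtain ⟨x, t⟩ := p
      simp only [hUfun]
      rw [hdCt x t hp, hdC x t hp, V₁.eqCt (x, t) hp]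
      simp only [ContinuousLinearMap.mul_def, comp_assoc, comp_add, add_comp, comp_smul,
        smul_comp, comp_neg, neg_comp, comp_sub, sub_comp, comp_zero, zero_comp, m2c_add,
        m2c_smul, ExtAux.one_comp', comp_id, hUZc]
      simp only [hP', hQ', ContinuousLinearMap.mul_def, comp_assoc, comp_add, add_comp,
        comp_smul, smul_comp, comp_neg, neg_comp, comp_sub, sub_comp, ExtAux.one_comp', comp_id,
        comp_id, hUZc]
      module
    eqXx := by
      intro p hp
      obtain ⟨x, t⟩ := p
      simp only [hVfun, hUfun]
      rw [hdX x t hp, V₁.eqXx (x, t) hp]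
      have hLy := congrArg
        (fun T => ExtAux.Ef P Q (x, t) ∘L (T ∘L ExtAux.Ef P' Q' (x, t)))
        (V₁.eqLyap (x, t) hp)
      simp only [ContinuousLinearMap.mul_def, comp_assoc, comp_add, add_comp, comp_smul,
        smul_comp, comp_neg, neg_comp, comp_sub, sub_comp, comp_zero, zero_comp, m2c_add,
        m2c_smul, ExtAux.one_comp', comp_id, ExtAux.comm_swap (hEA (x, t)),
        ExtAux.comm_swap (hEP (x, t)), ExtAux.comm_swap (hEQ (x, t)), hUZc] at hLy ⊢
      simp only [hP, hQ, hP', hQ', ContinuousLinearMap.mul_def, comp_assoc, comp_add,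
        add_comp, comp_smul, smul_comp, comp_neg, neg_comp, comp_sub, sub_comp, ExtAux.one_comp', comp_id, hUZc] at hLy ⊢
      linear_combination (norm := module) (-k2) • hLy
    eqXt := by
      intro p hp
      obtain ⟨x, t⟩ := p
      simp only [hVfun, hUfun]
      rw [hdXt x t hp, V₁.eqXt (x, t) hp]
      have hL := V₁.eqLyap (x, t) hp
      have hLy1 := congrArg
        (fun T => ExtAux.Ef P Q (x, t) ∘L ((V₁.A ∘L T) ∘L ExtAux.Ef P' Q' (x, t))) hL
      have hLy2 := congrArg
        (fun T => ExtAux.Ef P Q (x, t) ∘L ((T ∘L V₁.Aζ) ∘L ExtAux.Ef P' Q' (x, t))) hL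
      have hLy0 := congrArg
        (fun T => ExtAux.Ef P Q (x, t) ∘L (T ∘L ExtAux.Ef P' Q' (x, t))) hL
      simp only [ContinuousLinearMap.mul_def, comp_assoc, comp_add, add_comp, comp_smul,
        smul_comp, comp_neg, neg_comp, comp_sub, sub_comp, comp_zero, zero_comp, m2c_add,
        m2c_smul, ExtAux.one_comp', comp_id, ExtAux.comm_swap (hEA (x, t)),
        ExtAux.comm_swap (hEP (x, t)), ExtAux.comm_swap (hEQ (x, t)), hUZc] at hLy1 hLy2 hLy0 ⊢
      simp only [hP, hQ, hP', hQ', ContinuousLinearMap.mul_def, comp_assoc, comp_add,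
        add_comp, comp_smul, smul_comp, comp_neg, neg_comp, comp_sub, sub_comp, ExtAux.one_comp', comp_id, hUZc] at hLy1 hLy2 hLy0 ⊢
      linear_combination (norm := module)
        (-(Complex.I * k2)) • hLy1 + (Complex.I * k2) • hLy2 + (-(Complex.I * k)) • hLy0
    eqLyap := by
      intro p hp
      have h1 := congrArg
        (fun T => ExtAux.Ef P Q p ∘L (T ∘L ExtAux.Ef P' Q' p)) (V₁.eqLyap p hp)
      simp only [hVfun, hUfun]
      simp only [ContinuousLinearMap.mul_def, comp_assoc, comp_add, add_comp, comp_smul,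
        smul_comp, comp_neg, neg_comp, comp_sub, sub_comp, comp_zero, zero_comp, m2c_add,
        m2c_smul, ExtAux.one_comp', comp_id, ExtAux.comm_swap (hEA p), hUZc] at h1 ⊢
      linear_combination (norm := module) h1
    eqLink := by intro p hp; rfl
  }, rfl, rfl, rfl, rfl, rfl, rfl, rfl, rfl, rfl, ?_⟩
  intro p hp
  have hu1 : ExtAux.Ef P' Q' p ∘L ExtAux.Ef (-P') (-Q') p = 1 := ExtAux.Ef_mul_inv P' Q' p
  have he2 : ExtAux.Ef (-P) (-Q) p ∘L ExtAux.Ef P Q p = 1 := ExtAux.Ef_inv_mul P Q p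
  simp only [Vessel.H, pow_zero, ExtAux.one_comp', hVfun, hUfun]
  congr 1
  have hinner : (ExtAux.Ef (-P') (-Q') p ∘L V₁.Xi p ∘L ExtAux.Ef (-P) (-Q) p) ∘L
      (ExtAux.Ef P Q p ∘L V₁.B p) =
      ExtAux.Ef (-P') (-Q') p ∘L (V₁.Xi p ∘L V₁.B p) := by
    rw [comp_assoc, ExtAux.comp_cancel he2]
  rw [hinner, ExtAux.comp_cancel hu1]
end
end
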